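/- Let a, b, c : ℕ → ℂ (indexed from 1, with the convention a_0 = c_0 = 1). Fix z with 0 < |z| < 1 and let u = (u_k)_{k≥0} be a sequence of complex numbers such that for every k ≥ 0 the series ∑_{m=k+1}^∞ T(k,m;z) u_m converges absolutely and u_k = z^k + ∑_{m=k+1}^∞ T(k,m;z) u_m. Then u satisfies the three-term recurrence u_{k−1} + b_k u_k + a_k c_k u_{k+1} = (z + 1/z) u_k for all k ≥ 1. -/

import Mathlib

noncomputable section

def greenG (z : ℂ) (k m : ℤ) : ℂ :=
  if k ≤ m then (z ^ (m - k) - z ^ (k - m)) / (z - z⁻¹) else 0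

def kerT (a b c : ℕ → ℂ) (z : ℂ) (k m : ℕ) : ℂ :=
  -(b m) * greenG z k m + (1 - a (m - 1) * c (m - 1)) * greenG z k ((m : ℤ) - 1)

lemma pow_id (z : ℂ) (hz : z ≠ 0) (t : ℤ) :
    (z ^ (t + 1) - z ^ (-t - 1)) + (z ^ (t - 1) - z ^ (-t + 1))
      = (z + 1 / z) * (z ^ t - z ^ (-t)) := by
  have h1 : (-t - 1 : ℤ) = -t + (-1) := by ring
  have h2 : (t - 1 : ℤ) = t + (-1) := by ring
  have h3 : (-t + 1 : ℤ) = -t + 1 := rfl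
  rw [zpow_add_one₀ hz, h1, zpow_add₀ hz, h2, zpow_add₀ hz, show (-t+1:ℤ) = -t + 1 from rfl,
    zpow_add₀ hz]
  simp only [zpow_neg, zpow_one]
  have hw : z ^ t ≠ 0 := zpow_ne_zero t hz
  field_simp
  ring

lemma greenG_self (z : ℂ) (k : ℤ) : greenG z k k = 0 := by simp [greenG]

lemma greenG_succ (z : ℂ) (hz2 : z - z⁻¹ ≠ 0) (k : ℤ) : greenG z k (k+1) = 1 := by
  simp only [greenG, if_pos (show k ≤ k+1 by omega)]
  rw [show k + 1 - k = (1:ℤ) by ring, show k - (k+1) = (-1:ℤ) by ring, zpow_one, zpow_neg_one]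
  exact div_self hz2

lemma greenG_succ2 (z : ℂ) (hz0 : z ≠ 0) (hz2 : z - z⁻¹ ≠ 0) (k : ℤ) :
    greenG z k (k+2) = z + z⁻¹ := by
  simp only [greenG, if_pos (show k ≤ k+2 by omega)]
  rw [show k + 2 - k = (2:ℤ) by ring, show k - (k+2) = (-2:ℤ) by ring, div_eq_iff hz2]
  have e1 : z ^ (2:ℤ) = z * z := by
    rw [show (2:ℤ) = 1 + 1 by ring, zpow_add₀ hz0, zpow_one]
  have e2 : z ^ (-2:ℤ) = (z * z)⁻¹ := by
    rw [show (-2:ℤ) = -(2:ℤ) from rfl, zpow_neg, e1]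
  rw [e1, e2]
  field_simp
  ring

lemma greenG_rec (z : ℂ) (hz0 : z ≠ 0) (k m : ℤ) (h : k + 2 ≤ m) :
    greenG z k m + greenG z (k+2) m = (z + 1/z) * greenG z (k+1) m := by
  simp only [greenG, if_pos (show k ≤ m by omega), if_pos (show k+2 ≤ m by omega),
    if_pos (show k+1 ≤ m by omega)]
  rw [← add_div, ← mul_div_assoc]
  congr 1
  have e1 : m - k = (m - (k+1)) + 1 := by ring
  have e2 : k - m = -(m-(k+1)) - 1 := by ring
  have e3 : m - (k+2) = (m-(k+1)) - 1 := by ring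
  have e4 : (k+2) - m = -(m-(k+1)) + 1 := by ring
  have e5 : (k+1) - m = -(m-(k+1)) := by ring
  rw [e1, e2, e3, e4, e5]
  exact pow_id z hz0 (m - (k+1))

lemma kerT_rec (a b c : ℕ → ℂ) (z : ℂ) (hz0 : z ≠ 0)
    (n M : ℕ) (hM : n + 3 ≤ M) :
    kerT a b c z n M + kerT a b c z (n+2) M = (z + 1/z) * kerT a b c z (n+1) M := by
  unfold kerT
  have h1 := greenG_rec z hz0 (n:ℤ) (M:ℤ) (by exact_mod_cast by omega : (n:ℤ) + 2 ≤ (M:ℤ))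
  have h2 := greenG_rec z hz0 (n:ℤ) ((M:ℤ)-1) (by
    have : (n:ℤ) + 3 ≤ (M:ℤ) := by exact_mod_cast hM
    omega)
  push_cast
  linear_combination (-(b M)) * h1 + (1 - a (M-1) * c (M-1)) * h2

/-- Converse direction of Theorem 1.1: every solution of the discrete Volterra-type
equation `u_k = z^k + ∑_{m=k+1}^∞ T(k,m;z) u_m` (the series converging absolutely)
solves the three-term recurrence
`u_{k-1} + b_k u_k + a_k c_k u_{k+1} = (z + 1/z) u_k`, `k ≥ 1`. -/
theorem stmt6 (a b c : ℕ → ℂ) (ha0 : a 0 = 1) (hc0 : c 0 = 1)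
    (z : ℂ) (hz0 : z ≠ 0) (hz1 : ‖z‖ < 1)
    (u : ℕ → ℂ)
    (hsum : ∀ k : ℕ, Summable (fun m : ℕ => ‖kerT a b c z k (m + k + 1) * u (m + k + 1)‖))
    (hvolt : ∀ k : ℕ,
      u k = z ^ k + ∑' m : ℕ, kerT a b c z k (m + k + 1) * u (m + k + 1)) :
    ∀ k : ℕ, 1 ≤ k →
      u (k - 1) + b k * u k + a k * c k * u (k + 1) = (z + 1 / z) * u k := by
  intro k hk
  obtain ⟨n, rfl⟩ : ∃ n, k = n + 1 := ⟨k - 1, by omega⟩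
  simp only [Nat.add_sub_cancel]
  have hz2 : z - z⁻¹ ≠ 0 := by
    intro h
    have hzz : z * z = 1 := by
      have he : z = z⁻¹ := sub_eq_zero.mp h
      calc z * z = z * z⁻¹ := by rw [← he]
        _ = 1 := mul_inv_cancel₀ hz0
    have h1 : ‖z‖ * ‖z‖ = 1 := by
      rw [← norm_mul, hzz]; simp
    nlinarith [norm_nonneg z]
  have Sf : Summable (fun m : ℕ => kerT a b c z n (m + n + 1) * u (m + n + 1)) :=
    (hsum n).of_norm
  have Sg : Summable (fun m : ℕ => kerT a b c z (n+1) (m + (n+1) + 1) * u (m + (n+1) + 1)) :=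
    (hsum (n+1)).of_norm
  have Sh : Summable (fun m : ℕ => kerT a b c z (n+2) (m + (n+2) + 1) * u (m + (n+2) + 1)) :=
    (hsum (n+2)).of_norm
  have hA := hvolt n
  have hB := hvolt (n+1)
  have hC := hvolt (n+2)
  rw [Summable.tsum_eq_zero_add Sf] at hA
  rw [Summable.tsum_eq_zero_add ((summable_nat_add_iff 1).2 Sf)] at hA
  rw [Summable.tsum_eq_zero_add Sg] at hB
  have i0 : (0:ℕ) + n + 1 = n + 1 := by omega
  have i1 : (0:ℕ) + 1 + n + 1 = n + 2 := by omega
  have i2 : ∀ m : ℕ, m + 1 + 1 + n + 1 = m + n + 3 := fun m => by omega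
  simp only [i0, i1, i2] at hA
  have j0 : (0:ℕ) + (n+1) + 1 = n + 2 := by omega
  have j1 : ∀ m : ℕ, m + 1 + (n+1) + 1 = m + n + 3 := fun m => by omega
  simp only [j0, j1] at hB
  have j2 : ∀ m : ℕ, m + (n+2) + 1 = m + n + 3 := fun m => by omega
  simp only [j2] at hC
  have SfT : Summable (fun m : ℕ => kerT a b c z n (m + n + 3) * u (m + n + 3)) := by
    have := (summable_nat_add_iff 2).2 Sf
    simpa [show ∀ m : ℕ, m + 2 + n + 1 = m + n + 3 from fun m => by omega] using this
  have ShT : Summable (fun m : ℕ => kerT a b c z (n+2) (m + n + 3) * u (m + n + 3)) := by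
    simpa [j2] using Sh
  have tails : (∑' m : ℕ, kerT a b c z n (m+n+3) * u (m+n+3))
      + (∑' m : ℕ, kerT a b c z (n+2) (m+n+3) * u (m+n+3))
      = (z + 1/z) * ∑' m : ℕ, kerT a b c z (n+1) (m+n+3) * u (m+n+3) := by
    rw [← Summable.tsum_add SfT ShT, ← tsum_mul_left]
    apply tsum_congr
    intro m
    have hrec := kerT_rec a b c z hz0 n (m+n+3) (by omega)
    rw [← add_mul, hrec]; ring
  have T1 : kerT a b c z n (n+1) = -(b (n+1)) := by
    unfold kerT
    rw [show ((n+1:ℕ):ℤ) - 1 = (n:ℤ) by push_cast; ring, greenG_self,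
      show ((n+1:ℕ):ℤ) = (n:ℤ) + 1 by push_cast; ring, greenG_succ z hz2]
    ring
  have T2 : kerT a b c z (n+1) (n+2) = -(b (n+2)) := by
    unfold kerT
    rw [show ((n+2:ℕ):ℤ) - 1 = ((n+1:ℕ):ℤ) by push_cast; ring, greenG_self,
      show ((n+2:ℕ):ℤ) = ((n+1:ℕ):ℤ) + 1 by push_cast; ring, greenG_succ z hz2]
    ring
  have T3 : kerT a b c z n (n+2) = -(b (n+2)) * (z + z⁻¹) + (1 - a (n+1) * c (n+1)) := by
    unfold kerT
    rw [show ((n+2:ℕ):ℤ) = (n:ℤ) + 2 by push_cast; ring, greenG_succ2 z hz0 hz2,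
      show ((n:ℤ) + 2) - 1 = (n:ℤ) + 1 by ring, greenG_succ z hz2,
      show n + 2 - 1 = n + 1 from rfl]
    ring
  rw [T1, T3] at hA
  rw [T2] at hB
  have hzn : (1/z) * z ^ (n+1) = z ^ n := by
    field_simp
    ring
  linear_combination hA - (z + 1/z) * hB + hC + tails - hzn
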